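/- Let G = (V, E) be a finite directed graph with no self-loops. The Graver basis 𝔊_{A'_TV} of the matrix A'_TV equals 𝔊₁ ∪ 𝔊₂, where 𝔊₁ = {±(0, e_f, e_f) : f ∈ E} (e_f the standard basis vector of ℤ^E at edge f), and 𝔊₂ consists of all vectors ±z_{S,E⁺,E⁻} where S ⊆ V induces a connected subgraph, δ⁺(S) ∪ δ⁻(S) = E⁺ ∪ E⁻ is a partition of the crossing edges into disjoint sets E⁺ and E⁻, and z_{S,E⁺,E⁻} = (χ_S, a⁺, a⁻) is defined by: for f ∈ δ⁺(S), a⁺_f = 1, a⁻_f = 0 if f ∈ E⁺ and a⁺_f = 0, a⁻_f = −1 if f ∈ E⁻; for f ∈ δ⁻(S), a⁺_f = −1, a⁻_f = 0 if f ∈ E⁺ and a⁺_f = 0, a⁻_f = 1 if f ∈ E⁻; and a⁺_f = a⁻_f = 0 for all other edges f. -/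

import Mathlib

open scoped Classical

/-- The undirected support graph of the directed edge set `E`. -/
def undirGraph {V : Type*} (E : Finset (V × V)) : SimpleGraph V where
  Adj u v := u ≠ v ∧ ((u, v) ∈ E ∨ (v, u) ∈ E)
  symm := by
    constructor
    intro u v h
    exact ⟨h.1.symm, h.2.elim Or.inr Or.inl⟩
  loopless := by constructor; intro u h; exact h.1 rfl

/-- `S ⊆ V` induces a connected subgraph of the (undirected version of the) graph. -/
def InducesConnected {V : Type*} (E : Finset (V × V)) (S : Set V) : Prop :=
  S.Nonempty ∧ ((undirGraph E).induce S).Connected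

/-- Integer indicator vector of a set of vertices. -/
noncomputable def chiV {V : Type*} (S : Set V) : V → ℤ :=
  S.indicator 1

/-- Integer indicator vector of a set of edges. -/
noncomputable def chiE {V : Type*} {E : Finset (V × V)}
    (T : Set {e : V × V // e ∈ E}) : {e : V × V // e ∈ E} → ℤ :=
  T.indicator 1

/-- Outgoing edges of `S`. -/
def deltaPlus {V : Type*} (E : Finset (V × V)) (S : Set V) :
    Set {e : V × V // e ∈ E} :=
  {e | (e : V × V).1 ∈ S ∧ (e : V × V).2 ∉ S}

/-- Incoming edges of `S`. -/
def deltaMinus {V : Type*} (E : Finset (V × V)) (S : Set V) :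
    Set {e : V × V // e ∈ E} :=
  {e | (e : V × V).1 ∉ S ∧ (e : V × V).2 ∈ S}

/-- The conformal (sign-compatible, coordinatewise) partial order `x ⊑ y`. -/
def Sqle {ι : Type*} (x y : ι → ℤ) : Prop :=
  ∀ i, 0 ≤ x i * y i ∧ |x i| ≤ |y i|

/-- `(x, a)` lies in the integer kernel of `A_TV`. -/
def InKerATV {V : Type*} (E : Finset (V × V)) (x : V → ℤ)
    (a : {e : V × V // e ∈ E} → ℤ) : Prop :=
  ∀ e : {e : V × V // e ∈ E}, x (e : V × V).1 - x (e : V × V).2 = a e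

/-- `(x, a)` is a Graver basis element of `A_TV`: a `⊑`-minimal nonzero
element of the integer kernel. -/
def InGraverATV {V : Type*} (E : Finset (V × V)) (x : V → ℤ)
    (a : {e : V × V // e ∈ E} → ℤ) : Prop :=
  InKerATV E x a ∧ ¬(x = 0 ∧ a = 0) ∧
    ∀ (x' : V → ℤ) (a' : {e : V × V // e ∈ E} → ℤ),
      InKerATV E x' a' → ¬(x' = 0 ∧ a' = 0) → Sqle x' x → Sqle a' a →
        x' = x ∧ a' = a

/-- `(x, a⁺, a⁻)` lies in the integer kernel of `A'_TV`. -/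
def InKerATV' {V : Type*} (E : Finset (V × V)) (x : V → ℤ)
    (ap am : {e : V × V // e ∈ E} → ℤ) : Prop :=
  ∀ e : {e : V × V // e ∈ E}, x (e : V × V).1 - x (e : V × V).2 = ap e - am e

/-- `(x, a⁺, a⁻)` is a Graver basis element of `A'_TV`: a `⊑`-minimal nonzero
element of the integer kernel. -/
def InGraverATV' {V : Type*} (E : Finset (V × V)) (x : V → ℤ)
    (ap am : {e : V × V // e ∈ E} → ℤ) : Prop :=
  InKerATV' E x ap am ∧ ¬(x = 0 ∧ ap = 0 ∧ am = 0) ∧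
    ∀ (x' : V → ℤ) (ap' am' : {e : V × V // e ∈ E} → ℤ),
      InKerATV' E x' ap' am' → ¬(x' = 0 ∧ ap' = 0 ∧ am' = 0) →
        Sqle x' x → Sqle ap' ap → Sqle am' am →
          x' = x ∧ ap' = ap ∧ am' = am

/-- The `a⁺`-part of the Graver move `z_{S,E⁺,E⁻}`. -/
noncomputable def zPlus {V : Type*} (E : Finset (V × V)) (S : Set V)
    (Ep : Set {e : V × V // e ∈ E}) : {e : V × V // e ∈ E} → ℤ :=
  fun f =>
    if f ∈ deltaPlus E S then (if f ∈ Ep then 1 else 0)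
    else if f ∈ deltaMinus E S then (if f ∈ Ep then -1 else 0)
    else 0

/-- The `a⁻`-part of the Graver move `z_{S,E⁺,E⁻}`. -/
noncomputable def zMinus {V : Type*} (E : Finset (V × V)) (S : Set V)
    (Em : Set {e : V × V // e ∈ E}) : {e : V × V // e ∈ E} → ℤ :=
  fun f =>
    if f ∈ deltaPlus E S then (if f ∈ Em then -1 else 0)
    else if f ∈ deltaMinus E S then (if f ∈ Em then 1 else 0)
    else 0


section Aux

variable {V : Type*}

lemma chiV_apply (S : Set V) (u : V) : chiV S u = if u ∈ S then 1 else 0 := by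
  simp [chiV, Set.indicator_apply]

lemma sqle_zero {ι : Type*} {x' x : ι → ℤ} (h : Sqle x' x) {i : ι} (hi : x i = 0) :
    x' i = 0 := by
  have := (h i).2
  rw [hi] at this
  simpa using abs_nonpos_iff.mp (by simpa using this)

lemma sqle_neg {ι : Type*} {x' x : ι → ℤ} (h : Sqle x' (-x)) : Sqle (-x') x := by
  intro i
  obtain ⟨h1, h2⟩ := h i
  constructor
  · simp only [Pi.neg_apply] at *; nlinarith
  · simpa using h2

lemma InKerATV'.neg {E : Finset (V × V)} {x : V → ℤ} {ap am : {e : V × V // e ∈ E} → ℤ}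
    (h : InKerATV' E x ap am) : InKerATV' E (-x) (-ap) (-am) := by
  intro e
  have := h e
  simp only [Pi.neg_apply]
  linarith

lemma InGraverATV'.neg {E : Finset (V × V)} {x : V → ℤ} {ap am : {e : V × V // e ∈ E} → ℤ}
    (h : InGraverATV' E x ap am) : InGraverATV' E (-x) (-ap) (-am) := by
  obtain ⟨hker, hnz, hmin⟩ := h
  refine ⟨hker.neg, ?_, ?_⟩
  · rintro ⟨h1, h2, h3⟩
    exact hnz ⟨by simpa using h1, by simpa using h2, by simpa using h3⟩
  · intro x' ap' am' hker' hnz' hx hap ham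
    have := hmin (-x') (-ap') (-am') hker'.neg
      (by rintro ⟨h1, h2, h3⟩; exact hnz' ⟨by simpa using h1, by simpa using h2, by simpa using h3⟩)
      (sqle_neg hx) (sqle_neg hap) (sqle_neg ham)
    obtain ⟨h1, h2, h3⟩ := this
    refine ⟨?_, ?_, ?_⟩
    · rw [← neg_neg x', h1]
    · rw [← neg_neg ap', h2]
    · rw [← neg_neg am', h3]

/-- Constancy of a function satisfying edge-equality on a connected induced subgraph. -/
lemma const_on_connected {E : Finset (V × V)} {S : Set V}
    (hconn : ((undirGraph E).induce S).Connected) (f : V → ℤ)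
    (hf : ∀ u w : V, u ∈ S → w ∈ S → ((u, w) ∈ E ∨ (w, u) ∈ E) → f u = f w)
    {u w : V} (hu : u ∈ S) (hw : w ∈ S) : f u = f w := by
  have key : ∀ (a b : S), ((undirGraph E).induce S).Walk a b → f a = f b := by
    intro a b p
    induction p with
    | nil => rfl
    | @cons u c w h q ih =>
      have hadj : (undirGraph E).Adj u c := by simpa using h
      exact (hf u c u.2 c.2 hadj.2).trans ih
  obtain ⟨p⟩ := hconn.preconnected ⟨u, hu⟩ ⟨w, hw⟩
  exact key _ _ p

/-- The `z` vector lies in the kernel. -/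
lemma zKer {E : Finset (V × V)} {S : Set V} {Ep Em : Set {e : V × V // e ∈ E}}
    (hU : Ep ∪ Em = deltaPlus E S ∪ deltaMinus E S) (hI : Ep ∩ Em = ∅) :
    InKerATV' E (chiV S) (zPlus E S Ep) (zMinus E S Em) := by
  intro e
  have hmem : ∀ f : {e : V × V // e ∈ E}, f ∈ deltaPlus E S ∪ deltaMinus E S →
      (f ∈ Ep ∧ f ∉ Em) ∨ (f ∉ Ep ∧ f ∈ Em) := by
    intro f hf
    rw [← hU] at hf
    rcases hf with h | h
    · left; exact ⟨h, fun hm => by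
        have : f ∈ Ep ∩ Em := ⟨h, hm⟩
        simp [hI] at this⟩
    · by_cases hp : f ∈ Ep
      · left; exact ⟨hp, fun hm => by
          have : f ∈ Ep ∩ Em := ⟨hp, hm⟩
          simp [hI] at this⟩
      · right; exact ⟨hp, h⟩
  by_cases hu : (e : V × V).1 ∈ S <;> by_cases hw : (e : V × V).2 ∈ S
  · have h1 : e ∉ deltaPlus E S := by simp [deltaPlus, hu, hw]
    have h2 : e ∉ deltaMinus E S := by simp [deltaMinus, hu, hw]
    simp [zPlus, zMinus, chiV_apply, hu, hw, h1, h2]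
  · have h1 : e ∈ deltaPlus E S := ⟨hu, hw⟩
    have h2 : e ∉ deltaMinus E S := by simp [deltaMinus, hu, hw]
    rcases hmem e (Or.inl h1) with ⟨hp, hm⟩ | ⟨hp, hm⟩ <;>
      simp [zPlus, zMinus, chiV_apply, hu, hw, h1, h2, hp, hm]
  · have h1 : e ∉ deltaPlus E S := by simp [deltaPlus, hu, hw]
    have h2 : e ∈ deltaMinus E S := ⟨hu, hw⟩
    rcases hmem e (Or.inr h2) with ⟨hp, hm⟩ | ⟨hp, hm⟩ <;>
      simp [zPlus, zMinus, chiV_apply, hu, hw, h1, h2, hp, hm]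
  · have h1 : e ∉ deltaPlus E S := by simp [deltaPlus, hu, hw]
    have h2 : e ∉ deltaMinus E S := by simp [deltaMinus, hu, hw]
    simp [zPlus, zMinus, chiV_apply, hu, hw, h1, h2]

/-- `(0, e_f, e_f)` is a Graver element. -/
lemma graver_single [DecidableEq V] {E : Finset (V × V)} (f : {e : V × V // e ∈ E}) :
    InGraverATV' E 0 (Pi.single f 1) (Pi.single f 1) := by
  classical
  refine ⟨?_, ?_, ?_⟩
  · intro e; simp
  · rintro ⟨-, h2, -⟩
    have := congrFun h2 f
    simp at this
  · intro x' ap' am' hker' hnz' hx hap ham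
    have hx0 : x' = 0 := by
      funext i; exact sqle_zero hx (by simp)
    have hpm : ∀ e, ap' e = am' e := by
      intro e
      have := hker' e
      rw [hx0] at this
      simp at this
      linarith
    have hoff : ∀ e, e ≠ f → ap' e = 0 := by
      intro e he
      exact sqle_zero hap (by simp [Pi.single_apply, he])
    have hatf : ap' f = 0 ∨ ap' f = 1 := by
      obtain ⟨h1, h2⟩ := hap f
      simp [Pi.single_apply] at h1 h2
      rcases abs_le.mp h2 with ⟨hl, hr⟩
      omega
    rcases hatf with h | h
    · exfalso
      apply hnz'
      refine ⟨hx0, ?_, ?_⟩ <;> funext e <;> by_cases he : e = f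
      · rw [he, h]; rfl
      · rw [hoff e he]; rfl
      · rw [he, ← hpm, h]; rfl
      · rw [← hpm, hoff e he]; rfl
    · refine ⟨hx0, ?_, ?_⟩ <;> funext e <;> by_cases he : e = f <;>
        simp [he, Pi.single_apply]
      · exact h
      · exact hoff e he
      · rw [← hpm]; exact h
      · rw [← hpm]; exact hoff e he

end Aux


section Aux2

variable {V : Type*}

lemma partition_mem {α : Type*} {Ep Em D : Set α} (hU : Ep ∪ Em = D) (hI : Ep ∩ Em = ∅)
    {f : α} (hf : f ∈ D) : (f ∈ Ep ∧ f ∉ Em) ∨ (f ∉ Ep ∧ f ∈ Em) := by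
  rw [← hU] at hf
  by_cases hp : f ∈ Ep
  · left
    exact ⟨hp, fun hm => by
      have : f ∈ Ep ∩ Em := ⟨hp, hm⟩
      simp [hI] at this⟩
  · right
    exact ⟨hp, hf.resolve_left hp⟩

/-- `z_{S,E⁺,E⁻}` is a Graver element. -/
lemma graver_z {E : Finset (V × V)} {S : Set V}
    {Ep Em : Set {e : V × V // e ∈ E}}
    (hS : InducesConnected E S)
    (hU : Ep ∪ Em = deltaPlus E S ∪ deltaMinus E S) (hI : Ep ∩ Em = ∅) :
    InGraverATV' E (chiV S) (zPlus E S Ep) (zMinus E S Em) := by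
  obtain ⟨⟨v0, hv0⟩, hconn⟩ := hS
  refine ⟨zKer hU hI, ?_, ?_⟩
  · rintro ⟨h1, -, -⟩
    have := congrFun h1 v0
    rw [chiV_apply] at this
    simp [hv0] at this
  · intro x' ap' am' hker' hnz' hx hap ham
    have hzero : ∀ e : {e : V × V // e ∈ E},
        e ∉ deltaPlus E S → e ∉ deltaMinus E S → ap' e = 0 ∧ am' e = 0 := by
      intro e h1 h2
      exact ⟨sqle_zero hap (by simp [zPlus, h1, h2]),
        sqle_zero ham (by simp [zMinus, h1, h2])⟩
    have hoffS : ∀ u, u ∉ S → x' u = 0 := fun u hu =>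
      sqle_zero hx (by rw [chiV_apply]; simp [hu])
    have hconst : ∀ u w, u ∈ S → w ∈ S → x' u = x' w := by
      intro u w hu hw
      apply const_on_connected hconn x' ?_ hu hw
      intro a b ha hb hab
      rcases hab with h | h
      · have he1 : (⟨(a, b), h⟩ : {e : V × V // e ∈ E}) ∉ deltaPlus E S := by
          simp [deltaPlus, ha, hb]
        have he2 : (⟨(a, b), h⟩ : {e : V × V // e ∈ E}) ∉ deltaMinus E S := by
          simp [deltaMinus, ha, hb]
        obtain ⟨hp0, hm0⟩ := hzero _ he1 he2
        have hk : x' a - x' b = ap' ⟨(a, b), h⟩ - am' ⟨(a, b), h⟩ := hker' ⟨(a, b), h⟩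
        rw [hp0, hm0] at hk
        linarith
      · have he1 : (⟨(b, a), h⟩ : {e : V × V // e ∈ E}) ∉ deltaPlus E S := by
          simp [deltaPlus, ha, hb]
        have he2 : (⟨(b, a), h⟩ : {e : V × V // e ∈ E}) ∉ deltaMinus E S := by
          simp [deltaMinus, ha, hb]
        obtain ⟨hp0, hm0⟩ := hzero _ he1 he2
        have hk : x' b - x' a = ap' ⟨(b, a), h⟩ - am' ⟨(b, a), h⟩ := hker' ⟨(b, a), h⟩
        rw [hp0, hm0] at hk
        linarith
    have hv0val : x' v0 = 0 ∨ x' v0 = 1 := by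
      obtain ⟨h1, h2⟩ := hx v0
      rw [chiV_apply] at h1 h2
      simp [hv0] at h1 h2
      rcases abs_le.mp h2 with ⟨hl, hr⟩
      omega
    rcases hv0val with hc | hc
    · -- x' is identically zero; then everything is zero, contradiction.
      exfalso
      apply hnz'
      have hx0 : x' = 0 := by
        funext u
        by_cases hu : u ∈ S
        · rw [hconst u v0 hu hv0]; exact hc
        · exact hoffS u hu
      have hapm : ∀ e, ap' e = am' e := by
        intro e
        have hk := hker' e
        rw [hx0] at hk
        simp at hk
        linarith
      have hall : ∀ e, ap' e = 0 ∧ am' e = 0 := by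
        intro e
        by_cases hu : (e : V × V).1 ∈ S <;> by_cases hw : (e : V × V).2 ∈ S
        · exact hzero e (by simp [deltaPlus, hu, hw]) (by simp [deltaMinus, hu, hw])
        · have h1 : e ∈ deltaPlus E S := ⟨hu, hw⟩
          have h2 : e ∉ deltaMinus E S := by simp [deltaMinus, hu, hw]
          rcases partition_mem hU hI (Or.inl h1) with ⟨hp, hm⟩ | ⟨hp, hm⟩
          · have ham0 : am' e = 0 := sqle_zero ham (by simp [zMinus, h1, hm])
            exact ⟨(hapm e).trans ham0, ham0⟩
          · have hap0 : ap' e = 0 := sqle_zero hap (by simp [zPlus, h1, hp])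
            exact ⟨hap0, (hapm e).symm.trans hap0⟩
        · have h1 : e ∉ deltaPlus E S := by simp [deltaPlus, hu, hw]
          have h2 : e ∈ deltaMinus E S := ⟨hu, hw⟩
          rcases partition_mem hU hI (Or.inr h2) with ⟨hp, hm⟩ | ⟨hp, hm⟩
          · have ham0 : am' e = 0 := sqle_zero ham (by simp [zMinus, h1, h2, hm])
            exact ⟨(hapm e).trans ham0, ham0⟩
          · have hap0 : ap' e = 0 := sqle_zero hap (by simp [zPlus, h1, h2, hp])
            exact ⟨hap0, (hapm e).symm.trans hap0⟩
        · exact hzero e (by simp [deltaPlus, hu, hw]) (by simp [deltaMinus, hu, hw])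
      exact ⟨hx0, funext fun e => (hall e).1, funext fun e => (hall e).2⟩
    · -- x' = chiV S
      have hxeq : x' = chiV S := by
        funext u
        rw [chiV_apply]
        by_cases hu : u ∈ S
        · rw [if_pos hu, hconst u v0 hu hv0]; exact hc
        · rw [if_neg hu]; exact hoffS u hu
      have key : ∀ e : {e : V × V // e ∈ E},
          ap' e = zPlus E S Ep e ∧ am' e = zMinus E S Em e := by
        intro e
        have hk := hker' e
        rw [hxeq, chiV_apply, chiV_apply] at hk
        by_cases hu : (e : V × V).1 ∈ S <;> by_cases hw : (e : V × V).2 ∈ S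
        · have h1 : e ∉ deltaPlus E S := by simp [deltaPlus, hu, hw]
          have h2 : e ∉ deltaMinus E S := by simp [deltaMinus, hu, hw]
          obtain ⟨ha, hb⟩ := hzero e h1 h2
          simp [zPlus, zMinus, h1, h2, ha, hb]
        · have h1 : e ∈ deltaPlus E S := ⟨hu, hw⟩
          have h2 : e ∉ deltaMinus E S := by simp [deltaMinus, hu, hw]
          simp [hu, hw] at hk
          rcases partition_mem hU hI (Or.inl h1) with ⟨hp, hm⟩ | ⟨hp, hm⟩
          · have ham0 : am' e = 0 := sqle_zero ham (by simp [zMinus, h1, hm])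
            rw [ham0] at hk
            constructor
            · rw [zPlus, if_pos h1, if_pos hp]; linarith
            · rw [ham0, zMinus, if_pos h1, if_neg hm]
          · have hap0 : ap' e = 0 := sqle_zero hap (by simp [zPlus, h1, hp])
            rw [hap0] at hk
            constructor
            · rw [hap0, zPlus, if_pos h1, if_neg hp]
            · rw [zMinus, if_pos h1, if_pos hm]; linarith
        · have h1 : e ∉ deltaPlus E S := by simp [deltaPlus, hu, hw]
          have h2 : e ∈ deltaMinus E S := ⟨hu, hw⟩
          simp [hu, hw] at hk
          rcases partition_mem hU hI (Or.inr h2) with ⟨hp, hm⟩ | ⟨hp, hm⟩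
          · have ham0 : am' e = 0 := sqle_zero ham (by simp [zMinus, h1, h2, hm])
            rw [ham0] at hk
            constructor
            · rw [zPlus, if_neg h1, if_pos h2, if_pos hp]; linarith
            · rw [ham0, zMinus, if_neg h1, if_pos h2, if_neg hm]
          · have hap0 : ap' e = 0 := sqle_zero hap (by simp [zPlus, h1, h2, hp])
            rw [hap0] at hk
            constructor
            · rw [hap0, zPlus, if_neg h1, if_pos h2, if_neg hp]
            · rw [zMinus, if_neg h1, if_pos h2, if_pos hm]; linarith
        · have h1 : e ∉ deltaPlus E S := by simp [deltaPlus, hu, hw]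
          have h2 : e ∉ deltaMinus E S := by simp [deltaMinus, hu, hw]
          obtain ⟨ha, hb⟩ := hzero e h1 h2
          simp [zPlus, zMinus, h1, h2, ha, hb]
      exact ⟨hxeq, funext fun e => (key e).1, funext fun e => (key e).2⟩

end Aux2


section Aux3

variable {V : Type*}

/-- Connected component of `v` inside `P`, closed under adjacency into `P`. -/
lemma exists_component {E : Finset (V × V)} (P : Set V) {v : V} (hv : v ∈ P) :
    ∃ S : Set V, v ∈ S ∧ S ⊆ P ∧ InducesConnected E S ∧
      ∀ u ∈ S, ∀ w ∈ P, (undirGraph E).Adj u w → w ∈ S := by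
  classical
  set G := undirGraph E with hG
  have hvS : v ∈ {u | ∃ h : u ∈ P, (G.induce P).Reachable ⟨v, hv⟩ ⟨u, h⟩} :=
    ⟨hv, .rfl⟩
  set S : Set V := {u | ∃ h : u ∈ P, (G.induce P).Reachable ⟨v, hv⟩ ⟨u, h⟩} with hS
  have hSP : S ⊆ P := fun u hu => hu.1
  have hcl : ∀ u ∈ S, ∀ w ∈ P, G.Adj u w → w ∈ S := by
    rintro u ⟨huP, hr⟩ w hwP hadj
    refine ⟨hwP, hr.trans ?_⟩
    have : (G.induce P).Adj ⟨u, huP⟩ ⟨w, hwP⟩ := by simpa using hadj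
    exact this.reachable
  have walkS : ∀ (a b : ↥P), (G.induce P).Walk a b → ∀ ha : (a : V) ∈ S,
      ∃ hb : (b : V) ∈ S, (G.induce S).Reachable ⟨a, ha⟩ ⟨b, hb⟩ := by
    intro a b p
    induction p with
    | nil => exact fun ha => ⟨ha, .rfl⟩
    | @cons u c w h q ih =>
      intro ha
      have hadj : G.Adj u c := by simpa using h
      have hcS : (c : V) ∈ S := hcl u ha c c.2 hadj
      obtain ⟨hb, hr⟩ := ih hcS
      have hadj' : (G.induce S).Adj ⟨u, ha⟩ ⟨(c : V), hcS⟩ := by simpa using hadj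
      exact ⟨hb, hadj'.reachable.trans hr⟩
  refine ⟨S, hvS, hSP, ⟨⟨v, hvS⟩, ?_⟩, hcl⟩
  rw [SimpleGraph.connected_iff]
  refine ⟨?_, ⟨⟨v, hvS⟩⟩⟩
  rintro ⟨a, haP, hra⟩ ⟨b, hbP, hrb⟩
  obtain ⟨pa⟩ := hra
  obtain ⟨pb⟩ := hrb
  obtain ⟨ha', ra⟩ := walkS _ _ pa hvS
  obtain ⟨hb', rb⟩ := walkS _ _ pb hvS
  exact ra.symm.trans rb

lemma hard_pos {E : Finset (V × V)} (hloop : ∀ e ∈ E, e.1 ≠ e.2)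
    {x : V → ℤ} {ap am : {e : V × V // e ∈ E} → ℤ}
    (hG : InGraverATV' E x ap am) {v : V} (hv : 1 ≤ x v) :
    ∃ (S : Set V) (Ep Em : Set {e : V × V // e ∈ E}),
      InducesConnected E S ∧ Ep ∪ Em = deltaPlus E S ∪ deltaMinus E S ∧ Ep ∩ Em = ∅ ∧
      x = chiV S ∧ ap = zPlus E S Ep ∧ am = zMinus E S Em := by
  classical
  obtain ⟨hker, hnz, hmin⟩ := hG
  obtain ⟨S, hvS, hSP, hScon, hcl⟩ :=
    exists_component (E := E) {u | 1 ≤ x u} (show v ∈ {u | 1 ≤ x u} from hv)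
  have hSP' : ∀ u ∈ S, 1 ≤ x u := fun u hu => hSP hu
  have hplus : ∀ e : {e : V × V // e ∈ E}, e ∈ deltaPlus E S → 1 ≤ ap e - am e := by
    rintro e ⟨hu, hw⟩
    have hxu := hSP' _ hu
    have hxw : x (e : V × V).2 ≤ 0 := by
      by_contra hcon
      push_neg at hcon
      have hE : ((e : V × V).1, (e : V × V).2) ∈ E := by simpa using e.2
      have hadj : (undirGraph E).Adj (e : V × V).1 (e : V × V).2 :=
        ⟨hloop _ e.2, Or.inl hE⟩
      exact hw (hcl _ hu _ (by simp only [Set.mem_setOf_eq]; omega) hadj)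
    have hk := hker e
    linarith
  have hminus : ∀ e : {e : V × V // e ∈ E}, e ∈ deltaMinus E S → ap e - am e ≤ -1 := by
    rintro e ⟨hu, hw⟩
    have hxw := hSP' _ hw
    have hxu : x (e : V × V).1 ≤ 0 := by
      by_contra hcon
      push_neg at hcon
      have hE : ((e : V × V).1, (e : V × V).2) ∈ E := by simpa using e.2
      have hadj : (undirGraph E).Adj (e : V × V).2 (e : V × V).1 :=
        ⟨(hloop _ e.2).symm, Or.inr hE⟩
      exact hu (hcl _ hw _ (by simp only [Set.mem_setOf_eq]; omega) hadj)
    have hk := hker e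
    linarith
  set Ep : Set {e : V × V // e ∈ E} :=
    {e | (e ∈ deltaPlus E S ∧ 1 ≤ ap e) ∨ (e ∈ deltaMinus E S ∧ ap e ≤ -1)} with hEp
  set Em : Set {e : V × V // e ∈ E} :=
    (deltaPlus E S ∪ deltaMinus E S) \ Ep with hEm
  have memEp : ∀ e, e ∈ Ep ↔
      ((e ∈ deltaPlus E S ∧ 1 ≤ ap e) ∨ (e ∈ deltaMinus E S ∧ ap e ≤ -1)) := by
    intro e; rw [hEp]; exact Iff.rfl
  have memEm : ∀ e, e ∈ Em ↔ (e ∈ deltaPlus E S ∪ deltaMinus E S) ∧ e ∉ Ep := by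
    intro e; rw [hEm]; exact Iff.rfl
  have hEpD : Ep ⊆ deltaPlus E S ∪ deltaMinus E S := by
    intro e he
    rcases (memEp e).mp he with ⟨h, -⟩ | ⟨h, -⟩
    exacts [Or.inl h, Or.inr h]
  have hU : Ep ∪ Em = deltaPlus E S ∪ deltaMinus E S := by
    rw [hEm]; exact Set.union_diff_cancel hEpD
  have hI : Ep ∩ Em = ∅ := by
    rw [hEm]; exact Set.inter_diff_self _ _
  have hx1 : Sqle (chiV S) x := by
    intro u
    rw [chiV_apply]
    by_cases hu : u ∈ S
    · have h1 := hSP' u hu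
      rw [if_pos hu]
      exact ⟨by rw [one_mul]; linarith, by rw [abs_one]; exact le_trans h1 (le_abs_self _)⟩
    · rw [if_neg hu]; exact ⟨by simp, by simp⟩
  have hap1 : Sqle (zPlus E S Ep) ap := by
    intro e
    simp only [zPlus]
    by_cases h1 : e ∈ deltaPlus E S
    · rw [if_pos h1]
      by_cases hp : e ∈ Ep
      · rw [if_pos hp]
        have hge : 1 ≤ ap e := by
          rcases (memEp e).mp hp with ⟨-, h⟩ | ⟨hd, -⟩
          · exact h
          · exact absurd h1.1 hd.1
        exact ⟨by rw [one_mul]; linarith,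
          by rw [abs_one]; exact le_trans hge (le_abs_self _)⟩
      · rw [if_neg hp]; exact ⟨by simp, by simp⟩
    · rw [if_neg h1]
      by_cases h2 : e ∈ deltaMinus E S
      · rw [if_pos h2]
        by_cases hp : e ∈ Ep
        · have hle : ap e ≤ -1 := by
            rcases (memEp e).mp hp with ⟨hd, -⟩ | ⟨-, h⟩
            · exact absurd hd h1
            · exact h
          rw [if_pos hp]
          constructor
          · rw [neg_one_mul]; linarith
          · rw [abs_neg, abs_one]
            calc (1 : ℤ) ≤ -(ap e) := by linarith
              _ ≤ |ap e| := neg_le_abs _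
        · rw [if_neg hp]; exact ⟨by simp, by simp⟩
      · rw [if_neg h2]; exact ⟨by simp, by simp⟩
  have ham1 : Sqle (zMinus E S Em) am := by
    intro e
    simp only [zMinus]
    by_cases h1 : e ∈ deltaPlus E S
    · rw [if_pos h1]
      by_cases hm : e ∈ Em
      · rw [if_pos hm]
        have hnp : e ∉ Ep := ((memEm e).mp hm).2
        have hap0 : ap e ≤ 0 := by
          by_contra hcon
          push_neg at hcon
          exact hnp ((memEp e).mpr (Or.inl ⟨h1, by omega⟩))
        have hle : am e ≤ -1 := by have := hplus e h1; linarith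
        constructor
        · rw [neg_one_mul]; linarith
        · rw [abs_neg, abs_one]
          calc (1 : ℤ) ≤ -(am e) := by linarith
            _ ≤ |am e| := neg_le_abs _
      · rw [if_neg hm]; exact ⟨by simp, by simp⟩
    · rw [if_neg h1]
      by_cases h2 : e ∈ deltaMinus E S
      · rw [if_pos h2]
        by_cases hm : e ∈ Em
        · rw [if_pos hm]
          have hnp : e ∉ Ep := ((memEm e).mp hm).2
          have hap0 : 0 ≤ ap e := by
            by_contra hcon
            push_neg at hcon
            exact hnp ((memEp e).mpr (Or.inr ⟨h2, by omega⟩))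
          have hge : 1 ≤ am e := by have := hminus e h2; linarith
          exact ⟨by rw [one_mul]; linarith,
            by rw [abs_one]; exact le_trans hge (le_abs_self _)⟩
        · rw [if_neg hm]; exact ⟨by simp, by simp⟩
      · rw [if_neg h2]; exact ⟨by simp, by simp⟩
  have hzne : ¬(chiV S = 0 ∧ zPlus E S Ep = 0 ∧ zMinus E S Em = 0) := by
    rintro ⟨h1, -, -⟩
    have := congrFun h1 v
    rw [chiV_apply, if_pos hvS] at this
    simp at this
  obtain ⟨h1, h2, h3⟩ := hmin (chiV S) (zPlus E S Ep) (zMinus E S Em)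
    (zKer hU hI) hzne hx1 hap1 ham1
  exact ⟨S, Ep, Em, hScon, hU, hI, h1.symm, h2.symm, h3.symm⟩

end Aux3

/-- The Graver basis of `A'_TV` equals `𝔊₁ ∪ 𝔊₂`, where
`𝔊₁ = {±(0, e_f, e_f) : f ∈ E}` and `𝔊₂` consists of all `±z_{S,E⁺,E⁻}` for `S`
inducing a connected subgraph and `E⁺ ∪ E⁻` a partition of `δ(S)`. -/
theorem graverBasis_ATV'_characterization
    {V : Type*} [Fintype V] [DecidableEq V] (E : Finset (V × V))
    (hloop : ∀ e ∈ E, e.1 ≠ e.2)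
    (x : V → ℤ) (ap am : {e : V × V // e ∈ E} → ℤ) :
    InGraverATV' E x ap am ↔
      ((∃ (ε : ℤ) (f : {e : V × V // e ∈ E}), (ε = 1 ∨ ε = -1) ∧
          x = 0 ∧ ap = ε • Pi.single f 1 ∧ am = ε • Pi.single f 1) ∨
       (∃ (ε : ℤ) (S : Set V) (Ep Em : Set {e : V × V // e ∈ E}),
          (ε = 1 ∨ ε = -1) ∧ InducesConnected E S ∧
          Ep ∪ Em = deltaPlus E S ∪ deltaMinus E S ∧ Ep ∩ Em = ∅ ∧
          x = ε • chiV S ∧ ap = ε • zPlus E S Ep ∧ am = ε • zMinus E S Em)) := by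
  
  constructor
  · intro hG
    by_cases hx0 : x = 0
    · left
      have hpm : ∀ e, ap e = am e := by
        intro e
        have hk := hG.1 e
        rw [hx0] at hk
        simp at hk
        linarith
      have hex : ∃ f, ap f ≠ 0 := by
        by_contra hcon
        push_neg at hcon
        exact hG.2.1 ⟨hx0, funext hcon, funext fun e => (hpm e).symm.trans (hcon e)⟩
      obtain ⟨f, hf⟩ := hex
      have habs : 1 ≤ |ap f| := Int.one_le_abs hf
      have habs' : 1 ≤ |am f| := by rw [← hpm f]; exact habs
      have hx0' : Sqle (0 : V → ℤ) x := fun i => ⟨by simp, by simp⟩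
      by_cases hpos : 0 < ap f
      · have hsq : Sqle (Pi.single f 1) ap := by
          intro e
          by_cases he : e = f
          · subst he
            rw [Pi.single_eq_same]
            exact ⟨by rw [one_mul]; linarith, by rw [abs_one]; exact habs⟩
          · rw [Pi.single_eq_of_ne he]; exact ⟨by simp, by simp⟩
        have hsq' : Sqle (Pi.single f 1) am := by
          intro e
          rw [← hpm e]
          exact hsq e
        have hker0 : InKerATV' E 0 (Pi.single f 1) (Pi.single f 1) := by
          intro e; simp
        have hne0 : ¬((0 : V → ℤ) = 0 ∧ (Pi.single f 1 : {e : V × V // e ∈ E} → ℤ) = 0 ∧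
            (Pi.single f 1 : {e : V × V // e ∈ E} → ℤ) = 0) := by
          rintro ⟨-, h2, -⟩
          have := congrFun h2 f
          rw [Pi.single_eq_same] at this
          simp at this
        obtain ⟨-, h2, h3⟩ := hG.2.2 0 (Pi.single f 1) (Pi.single f 1) hker0 hne0 hx0' hsq hsq'
        exact ⟨1, f, Or.inl rfl, hx0, by rw [one_smul]; exact h2.symm,
          by rw [one_smul]; exact h3.symm⟩
      · push_neg at hpos
        have hneg : ap f ≤ -1 := by omega
        have hsq : Sqle (-(Pi.single f 1) : {e : V × V // e ∈ E} → ℤ) ap := by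
          intro e
          by_cases he : e = f
          · subst he
            rw [Pi.neg_apply, Pi.single_eq_same]
            exact ⟨by linarith [neg_one_mul (ap e)], by rw [abs_neg, abs_one]; exact habs⟩
          · rw [Pi.neg_apply, Pi.single_eq_of_ne he]; exact ⟨by simp, by simp⟩
        have hsq' : Sqle (-(Pi.single f 1) : {e : V × V // e ∈ E} → ℤ) am := by
          intro e
          rw [← hpm e]
          exact hsq e
        have hker0 : InKerATV' E 0 (-(Pi.single f 1)) (-(Pi.single f 1)) := by
          intro e; simp
        have hne0 : ¬((0 : V → ℤ) = 0 ∧ (-(Pi.single f 1) : {e : V × V // e ∈ E} → ℤ) = 0 ∧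
            (-(Pi.single f 1) : {e : V × V // e ∈ E} → ℤ) = 0) := by
          rintro ⟨-, h2, -⟩
          have := congrFun h2 f
          rw [Pi.neg_apply, Pi.single_eq_same] at this
          simp at this
        obtain ⟨-, h2, h3⟩ := hG.2.2 0 (-(Pi.single f 1)) (-(Pi.single f 1))
          hker0 hne0 hx0' hsq hsq'
        exact ⟨-1, f, Or.inr rfl, hx0, by rw [neg_one_smul]; exact h2.symm,
          by rw [neg_one_smul]; exact h3.symm⟩
    · right
      have hex : ∃ v, x v ≠ 0 := by
        by_contra hcon; push_neg at hcon; exact hx0 (funext hcon)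
      obtain ⟨v, hv⟩ := hex
      rcases lt_or_gt_of_ne hv with hneg | hpos
      · obtain ⟨S, Ep, Em, hc, hU, hI, h1, h2, h3⟩ :=
          hard_pos hloop hG.neg (v := v) (by simp only [Pi.neg_apply]; omega)
        refine ⟨-1, S, Ep, Em, Or.inr rfl, hc, hU, hI, ?_, ?_, ?_⟩
        · rw [neg_one_smul, ← h1, neg_neg]
        · rw [neg_one_smul, ← h2, neg_neg]
        · rw [neg_one_smul, ← h3, neg_neg]
      · obtain ⟨S, Ep, Em, hc, hU, hI, h1, h2, h3⟩ :=
          hard_pos hloop hG (v := v) (by omega)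
        exact ⟨1, S, Ep, Em, Or.inl rfl, hc, hU, hI, by rw [one_smul]; exact h1,
          by rw [one_smul]; exact h2, by rw [one_smul]; exact h3⟩
  · rintro (⟨ε, f, hε, hx, hap, ham⟩ | ⟨ε, S, Ep, Em, hε, hc, hU, hI, hx, hap, ham⟩)
    · subst hx hap ham
      rcases hε with rfl | rfl
      · simpa using graver_single f
      · have := (graver_single (E := E) f).neg
        simpa using this
    · subst hx hap ham
      rcases hε with rfl | rfl
      · simpa using graver_z hc hU hI
      · have := (graver_z hc hU hI).neg
        simpa using this
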